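/- For all sufficiently large t, the function g(a) = (2^{4t−5−2a} · (∑_{k=a−t}^{t−2} C(a−1,k))²)^a, defined for integers t−1 ≤ a ≤ 2t−3, attains its maximum at a = 2t−3, where g(2t−3) = (2·C(2t−3, t−2)²)^{2t−3}. -/

import Mathlib

open Finset

/-- `g(a) = (2^{4t-5-2a} (∑_{k=a-t}^{t-2} C(a-1,k))²)^a`. -/
def gFun (t a : ℕ) : ℕ :=
  (2 ^ (4 * t - 5 - 2 * a) * (∑ k ∈ Finset.Icc (a - t) (t - 2), (a - 1).choose k) ^ 2) ^ a

namespace Stmt18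

def S (t a : ℕ) : ℕ := ∑ k ∈ Finset.Icc (a - t) (t - 2), (a - 1).choose k

def T (t a : ℕ) : ℕ := 2 ^ (2 * t - 3 - a) * S t a

lemma gFun_eq (t a : ℕ) (ht : 2 ≤ t) (ha : a ≤ 2 * t - 3) :
    gFun t a = (2 * T t a ^ 2) ^ a := by
  have h : 4 * t - 5 - 2 * a = 1 + (2 * t - 3 - a) * 2 := by omega
  have h2 : (2 : ℕ) ^ (4 * t - 5 - 2 * a) = 2 * (2 ^ (2 * t - 3 - a)) ^ 2 := by
    rw [h, pow_add, pow_mul, pow_one]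
  rw [gFun, T, S, h2]; ring

lemma choose_succ_le (n m : ℕ) (h : n ≤ m + m) : n.choose (m + 1) ≤ n.choose m := by
  have h1 := Nat.choose_succ_right_eq n m
  have h2 : n.choose (m + 1) * (m + 1) ≤ n.choose m * (m + 1) := by
    rw [h1]; exact Nat.mul_le_mul_left _ (by omega)
  exact Nat.le_of_mul_le_mul_right h2 (by omega)

lemma choose_anti (n j m : ℕ) (hj : n ≤ j + j) (hjm : j ≤ m) :
    n.choose m ≤ n.choose j := by
  induction m with
  | zero =>
    have hj0 : j = 0 := by omega
    subst hj0; exact le_rfl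
  | succ m ih =>
    rcases Nat.lt_or_ge j (m + 1) with h | h
    · exact le_trans (choose_succ_le n m (by omega)) (ih (by omega))
    · have : j = m + 1 := by omega
      subst this; exact le_rfl

lemma window_ge (t a k : ℕ) (ht : 5 ≤ t) (ha1 : t - 1 ≤ a) (ha2 : a ≤ 2 * t - 3)
    (hk1 : a + 1 ≤ t + k) (hk2 : k ≤ t - 2) :
    (a - 1).choose (t - 2) ≤ (a - 1).choose k := by
  rcases Nat.lt_or_ge (k + k) (a - 1) with h | h
  · have hkn : k ≤ a - 1 := by omega
    rw [← Nat.choose_symm hkn]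
    exact choose_anti (a - 1) (a - 1 - k) (t - 2) (by omega) (by omega)
  · exact choose_anti (a - 1) k (t - 2) (by omega) hk2

lemma c1_le_c2 (t a : ℕ) (ht : 5 ≤ t) (ha1 : t ≤ a) (ha2 : a ≤ 2 * t - 3) :
    (a - 1).choose (a - t) ≤ (a - 1).choose (t - 2) := by
  have h1 : (a - 1).choose (a - t) = (a - 1).choose (t - 1) := by
    rw [← Nat.choose_symm (show a - t ≤ a - 1 by omega)]
    congr 1; omega
  have h2 : t - 1 = (t - 2) + 1 := by omega
  rw [h1, h2]
  exact choose_succ_le (a - 1) (t - 2) (by omega)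

lemma pascal (a j : ℕ) (ha : 1 ≤ a) :
    a.choose (j + 1) = (a - 1).choose j + (a - 1).choose (j + 1) := by
  obtain ⟨b, rfl⟩ : ∃ b, a = b + 1 := ⟨a - 1, by omega⟩
  simp [Nat.choose_succ_succ]

lemma sum_shift (f : ℕ → ℕ) (lo hi : ℕ) :
    ∑ k ∈ Icc (lo + 1) (hi + 1), f k = ∑ j ∈ Icc lo hi, f (j + 1) := by
  rw [← Finset.map_add_right_Icc lo hi 1, Finset.sum_map]
  rfl

lemma S_split_left (t a : ℕ) (ht : 5 ≤ t) (ha1 : t ≤ a) (ha2 : a ≤ 2 * t - 4) :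
    S t a = (a - 1).choose (a - t) + ∑ k ∈ Icc (a - t + 1) (t - 2), (a - 1).choose k := by
  rw [S]
  have h : Icc (a - t) (t - 2) = insert (a - t) (Icc (a - t + 1) (t - 2)) := by
    ext x; simp only [Finset.mem_Icc, Finset.mem_insert]; omega
  rw [h, Finset.sum_insert (by simp only [Finset.mem_Icc]; omega)]

lemma S_split_right (t a : ℕ) (ht : 5 ≤ t) (ha1 : t ≤ a) (ha2 : a ≤ 2 * t - 4) :
    S t a = (∑ j ∈ Icc (a - t) (t - 3), (a - 1).choose j) + (a - 1).choose (t - 2) := by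
  rw [S]
  have h2 : t - 2 = (t - 3) + 1 := by omega
  rw [h2, Finset.sum_Icc_succ_top (by omega)]

lemma sum_identity (t a : ℕ) (ht : 5 ≤ t) (ha1 : t ≤ a) (ha2 : a ≤ 2 * t - 4) :
    S t (a + 1) + ((a - 1).choose (a - t) + (a - 1).choose (t - 2)) = 2 * S t a := by
  have e1 : S t (a + 1) = ∑ k ∈ Icc (a - t + 1) (t - 2), a.choose k := by
    have h1 : (a + 1) - t = (a - t) + 1 := by omega
    have h2 : a + 1 - 1 = a := by omega
    rw [S, h1, h2]
  have h3 : t - 2 = (t - 3) + 1 := by omega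
  have e2 : ∑ k ∈ Icc (a - t + 1) (t - 2), a.choose k
      = ∑ j ∈ Icc (a - t) (t - 3), a.choose (j + 1) := by
    rw [h3, sum_shift]
  have e3 : ∑ j ∈ Icc (a - t) (t - 3), a.choose (j + 1)
      = (∑ j ∈ Icc (a - t) (t - 3), (a - 1).choose j)
        + ∑ j ∈ Icc (a - t) (t - 3), (a - 1).choose (j + 1) := by
    rw [← Finset.sum_add_distrib]
    exact Finset.sum_congr rfl fun j _ => pascal a j (by omega)
  have e4 : ∑ j ∈ Icc (a - t) (t - 3), (a - 1).choose (j + 1)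
      = ∑ k ∈ Icc (a - t + 1) (t - 2), (a - 1).choose k := by
    rw [h3, sum_shift]
  have e5 := S_split_left t a ht ha1 ha2
  have e6 := S_split_right t a ht ha1 ha2
  omega

lemma sum_lower (t a : ℕ) (ht : 5 ≤ t) (ha1 : t ≤ a) (ha2 : a ≤ 2 * t - 4) :
    (a - 1).choose (a - t) + (2 * t - 2 - a) * (a - 1).choose (t - 2) ≤ S t a := by
  rw [S_split_left t a ht ha1 ha2]
  have hcard : (Icc (a - t + 1) (t - 2)).card = 2 * t - 2 - a := by
    rw [Nat.card_Icc]; omega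
  have h := Finset.card_nsmul_le_sum (Icc (a - t + 1) (t - 2))
      (fun k => (a - 1).choose k) ((a - 1).choose (t - 2))
      (fun k hk => by
        simp only [Finset.mem_Icc] at hk
        exact window_ge t a k ht (by omega) (by omega) (by omega) hk.2)
  rw [hcard, smul_eq_mul] at h
  exact Nat.add_le_add_left h _

lemma key_ineqs (t a : ℕ) (ht : 5 ≤ t) (ha1 : t - 1 ≤ a) (ha2 : a ≤ 2 * t - 4) :
    S t (a + 1) ≤ 2 * S t a ∧
    (2 * t - 2 - a) * (2 * S t a) ≤ (2 * t - 1 - a) * S t (a + 1) := by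
  rcases Nat.lt_or_ge a t with hat | hat
  · -- a = t - 1
    have hae : a = t - 1 := by omega
    have hS : S t a = 2 ^ (t - 2) := by
      rw [S, hae]
      have h1 : t - 1 - t = 0 := by omega
      have h2 : t - 1 - 1 = t - 2 := by omega
      rw [h1, h2]
      have h3 : Icc 0 (t - 2) = range ((t - 2) + 1) := by
        ext x; simp only [Finset.mem_Icc, Finset.mem_range]; omega
      rw [h3, Nat.sum_range_choose]
    have hS' : S t (a + 1) + 1 = 2 ^ (t - 1) := by
      rw [S]
      have h1 : a + 1 - t = 0 := by omega
      have h2 : a + 1 - 1 = t - 1 := by omega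
      rw [h1, h2]
      have h4 : t - 1 = (t - 2) + 1 := by omega
      have h3 : range ((t - 2) + 1 + 1) = insert ((t - 2) + 1) (Icc 0 (t - 2)) := by
        ext x; simp only [Finset.mem_Icc, Finset.mem_insert, Finset.mem_range]; omega
      have h5 := Nat.sum_range_choose (t - 1)
      rw [show (t - 1) + 1 = (t - 2) + 1 + 1 by omega, h3,
        Finset.sum_insert (by simp only [Finset.mem_Icc]; omega)] at h5
      rw [show (t - 2) + 1 = t - 1 from h4.symm] at h5
      rw [Nat.choose_self] at h5
      omega
    have htp : t ≤ 2 ^ (t - 1) := by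
      have := Nat.lt_two_pow_self (n := t - 1); omega
    have hpow : 2 * 2 ^ (t - 2) = 2 ^ (t - 1) := by
      rw [show t - 1 = (t - 2) + 1 by omega, pow_succ]; ring
    constructor
    · omega
    · have hw1 : 2 * t - 2 - a = t - 1 := by omega
      have hw2 : 2 * t - 1 - a = t := by omega
      rw [hw1, hw2]
      have h2S : 2 * S t a = S t (a + 1) + 1 := by
        rw [hS]
        have : 2 * 2 ^ (t - 2) = 2 ^ (t - 1) := by
          rw [show t - 1 = (t - 2) + 1 by omega, pow_succ]; ring
        omega
      have hts : t - 1 ≤ S t (a + 1) := by omega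
      calc (t - 1) * (2 * S t a) = (t - 1) * S t (a + 1) + (t - 1) := by rw [h2S]; ring
        _ ≤ (t - 1) * S t (a + 1) + S t (a + 1) := by omega
        _ = ((t - 1) + 1) * S t (a + 1) := by ring
        _ = t * S t (a + 1) := by rw [show t - 1 + 1 = t by omega]
  · -- t ≤ a
    set c1 := (a - 1).choose (a - t) with hc1
    set c2 := (a - 1).choose (t - 2) with hc2
    have hid := sum_identity t a ht hat ha2
    have hlow := sum_lower t a ht hat ha2
    have hcc := c1_le_c2 t a ht hat (by omega)
    -- (iii): w * (c1 + c2) ≤ 2 * S t a, with w = 2t-1-a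
    have hu : 1 ≤ 2 * t - 3 - a := by omega
    set u := 2 * t - 3 - a with hudef
    have hw : 2 * t - 1 - a = u + 2 := by omega
    have hw1 : 2 * t - 2 - a = u + 1 := by omega
    have hiii : (u + 2) * (c1 + c2) ≤ 2 * S t a := by
      have h1 : u * c1 ≤ u * c2 := Nat.mul_le_mul_left _ hcc
      have e1 : (u + 2) * (c1 + c2) = 2 * c1 + u * c1 + (u * c2 + 2 * c2) := by ring
      have e2 : (u + 1) * c2 = u * c2 + c2 := by ring
      rw [hw1, e2] at hlow
      omega
    constructor
    · omega
    · rw [hw, hw1]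
      -- goal: (u+1) * (2 * S t a) ≤ (u+2) * S t (a+1)
      have h5 : (u + 2) * (2 * S t a) = (u + 2) * S t (a + 1) + (u + 2) * (c1 + c2) := by
        rw [← hid]; ring
      have h6 : (u + 2) * (2 * S t a) ≤ (u + 2) * S t (a + 1) + 2 * S t a := by
        rw [h5]; exact Nat.add_le_add_left hiii _
      have h7 : (u + 2) * (2 * S t a) = (u + 1) * (2 * S t a) + 2 * S t a := by ring
      omega

lemma T_mono (t a : ℕ) (ht : 5 ≤ t) (ha1 : t - 1 ≤ a) (ha2 : a ≤ 2 * t - 4) :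
    T t (a + 1) ≤ T t a := by
  have h := (key_ineqs t a ht ha1 ha2).1
  rw [T, T, show 2 * t - 3 - a = (2 * t - 3 - (a + 1)) + 1 by omega, pow_succ]
  calc 2 ^ (2 * t - 3 - (a + 1)) * S t (a + 1)
      ≤ 2 ^ (2 * t - 3 - (a + 1)) * (2 * S t a) := Nat.mul_le_mul_left _ h
    _ = 2 ^ (2 * t - 3 - (a + 1)) * 2 * S t a := by ring

lemma aux_sq (m : ℕ) (hm : 3 ≤ m) : (2 * m + 1) ^ 2 ≤ 2 * 3 ^ m := by
  induction m, hm using Nat.le_induction with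
  | base => norm_num
  | succ m hm ih =>
    have h2 : (2 * (m + 1) + 1) ^ 2 ≤ 3 * (2 * m + 1) ^ 2 := by nlinarith
    calc (2 * (m + 1) + 1) ^ 2 ≤ 3 * (2 * m + 1) ^ 2 := h2
      _ ≤ 3 * (2 * 3 ^ m) := by omega
      _ = 2 * 3 ^ (m + 1) := by rw [pow_succ]; ring

lemma numericN (t a : ℕ) (ht : 5 ≤ t) (ha : a ≤ 2 * t - 4) :
    3 ^ (2 * a) * (2 * t - 3) ^ 2 ≤ 2 ^ (2 * a + (4 * t - 7)) := by
  set m := t - 2 with hm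
  have n2 : 3 ^ (4 * t - 8) * (2 * t - 3) ^ 2 ≤ 2 ^ (8 * t - 15) := by
    have e1 : (3 : ℕ) ^ (4 * m) = 81 ^ m := by
      rw [pow_mul]; norm_num
    have e2 : (2 : ℕ) ^ (8 * m + 1) = 2 * 256 ^ m := by
      rw [pow_add, pow_mul, pow_one]
      norm_num [Nat.mul_comm]
    rw [show 4 * t - 8 = 4 * m by omega, show 8 * t - 15 = 8 * m + 1 by omega,
      show 2 * t - 3 = 2 * m + 1 by omega, e1, e2]
    have h1 : (81 : ℕ) ^ m * (2 * m + 1) ^ 2 ≤ 81 ^ m * (2 * 3 ^ m) :=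
      Nat.mul_le_mul_left _ (aux_sq m (by omega))
    have h2 : (81 : ℕ) ^ m * (2 * 3 ^ m) = 2 * 243 ^ m := by
      rw [show (243 : ℕ) = 81 * 3 by norm_num, mul_pow]; ring
    have h3 : (243 : ℕ) ^ m ≤ 256 ^ m := Nat.pow_le_pow_left (by norm_num) m
    calc (81 : ℕ) ^ m * (2 * m + 1) ^ 2 ≤ 81 ^ m * (2 * 3 ^ m) := h1
      _ = 2 * 243 ^ m := h2
      _ ≤ 2 * 256 ^ m := by omega
  -- combine
  have key : 3 ^ (2 * a) * (2 * t - 3) ^ 2 * 2 ^ (4 * t - 8)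
      ≤ 2 ^ (2 * a + (4 * t - 7)) * 2 ^ (4 * t - 8) := by
    have e4 : 4 * t - 8 = 2 * a + (4 * t - 8 - 2 * a) := by omega
    have h2 : (2 : ℕ) ^ (4 * t - 8 - 2 * a) ≤ 3 ^ (4 * t - 8 - 2 * a) :=
      Nat.pow_le_pow_left (by norm_num) _
    calc 3 ^ (2 * a) * (2 * t - 3) ^ 2 * 2 ^ (4 * t - 8)
        = 3 ^ (2 * a) * (2 * t - 3) ^ 2 * (2 ^ (2 * a) * 2 ^ (4 * t - 8 - 2 * a)) := by
          rw [← pow_add, ← e4]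
      _ ≤ 3 ^ (2 * a) * (2 * t - 3) ^ 2 * (2 ^ (2 * a) * 3 ^ (4 * t - 8 - 2 * a)) := by
          exact Nat.mul_le_mul_left _ (Nat.mul_le_mul_left _ h2)
      _ = 2 ^ (2 * a) * ((3 ^ (2 * a) * 3 ^ (4 * t - 8 - 2 * a)) * (2 * t - 3) ^ 2) := by ring
      _ = 2 ^ (2 * a) * (3 ^ (4 * t - 8) * (2 * t - 3) ^ 2) := by
          rw [← pow_add, show 2 * a + (4 * t - 8 - 2 * a) = 4 * t - 8 by omega]
      _ ≤ 2 ^ (2 * a) * 2 ^ (8 * t - 15) := Nat.mul_le_mul_left _ n2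
      _ = 2 ^ (2 * a + (4 * t - 7)) * 2 ^ (4 * t - 8) := by
          rw [← pow_add, ← pow_add]
          congr 1
          omega
  exact Nat.le_of_mul_le_mul_right key (by positivity)

lemma central_lower (t : ℕ) (ht : 5 ≤ t) :
    2 ^ (2 * t - 4) ≤ (2 * t - 3) * (2 * t - 3).choose (t - 2) := by
  have h1 := Nat.sum_range_choose (2 * t - 4)
  have h2 : ∀ i ∈ range ((2 * t - 4) + 1), (2 * t - 4).choose i ≤ (2 * t - 4).choose (t - 2) := by
    intro i _
    have := Nat.choose_le_middle i (2 * t - 4)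
    rwa [show (2 * t - 4) / 2 = t - 2 by omega] at this
  have h3 := Finset.sum_le_card_nsmul (range ((2 * t - 4) + 1)) (fun i => (2 * t - 4).choose i)
      ((2 * t - 4).choose (t - 2)) h2
  rw [Finset.card_range, smul_eq_mul] at h3
  have h4 : (2 * t - 4).choose (t - 2) ≤ (2 * t - 3).choose (t - 2) :=
    Nat.choose_le_choose _ (by omega)
  calc 2 ^ (2 * t - 4) = ∑ i ∈ range ((2 * t - 4) + 1), (2 * t - 4).choose i := h1.symm
    _ ≤ ((2 * t - 4) + 1) * (2 * t - 4).choose (t - 2) := h3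
    _ ≤ (2 * t - 3) * (2 * t - 3).choose (t - 2) := by
        have : (2 * t - 4) + 1 = 2 * t - 3 := by omega
        rw [this]
        exact Nat.mul_le_mul_left _ h4

lemma step (t a : ℕ) (ht : 5 ≤ t) (ha1 : t - 1 ≤ a) (ha2 : a ≤ 2 * t - 4)
    (hT' : (2 * t - 3).choose (t - 2) ≤ T t (a + 1)) :
    gFun t a ≤ gFun t (a + 1) := by
  obtain ⟨h2S, hw⟩ := key_ineqs t a ht ha1 ha2
  -- 4 S a ≤ 3 S (a+1)
  have h43 : 4 * S t a ≤ 3 * S t (a + 1) := by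
    have hw3 : 3 ≤ 2 * t - 1 - a := by omega
    set w1 := 2 * t - 2 - a with hw1
    have hww : 2 * t - 1 - a = w1 + 1 := by omega
    rw [hww] at hw
    have k1 : w1 * (4 * S t a) ≤ (2 * (w1 + 1)) * S t (a + 1) := by
      calc w1 * (4 * S t a) = 2 * (w1 * (2 * S t a)) := by ring
        _ ≤ 2 * ((w1 + 1) * S t (a + 1)) := Nat.mul_le_mul_left _ hw
        _ = (2 * (w1 + 1)) * S t (a + 1) := by ring
    have k2 : (2 * (w1 + 1)) * S t (a + 1) ≤ (3 * w1) * S t (a + 1) := by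
      have : 2 * (w1 + 1) ≤ 3 * w1 := by omega
      exact Nat.mul_le_mul_right _ this
    have k3 : w1 * (4 * S t a) ≤ w1 * (3 * S t (a + 1)) := by
      calc w1 * (4 * S t a) ≤ (3 * w1) * S t (a + 1) := le_trans k1 k2
        _ = w1 * (3 * S t (a + 1)) := by ring
    exact Nat.le_of_mul_le_mul_left k3 (by omega)
  -- 2 T a ≤ 3 T (a+1)
  have kT : 2 * T t a ≤ 3 * T t (a + 1) := by
    rw [T, T, show 2 * t - 3 - a = (2 * t - 3 - (a + 1)) + 1 by omega, pow_succ]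
    calc 2 * (2 ^ (2 * t - 3 - (a + 1)) * 2 * S t a)
        = 2 ^ (2 * t - 3 - (a + 1)) * (4 * S t a) := by ring
      _ ≤ 2 ^ (2 * t - 3 - (a + 1)) * (3 * S t (a + 1)) := Nat.mul_le_mul_left _ h43
      _ = 3 * (2 ^ (2 * t - 3 - (a + 1)) * S t (a + 1)) := by ring
  -- k2 : 3^(2a) ≤ 2^(2a+1) * T'(a+1)^2
  have hCc := central_lower t ht
  have kP : 3 ^ (2 * a) ≤ 2 ^ (2 * a + 1) * T t (a + 1) ^ 2 := by
    have hN := numericN t a ht ha2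
    have c1 : (2 * t - 3) ^ 2 * 3 ^ (2 * a) ≤ (2 * t - 3) ^ 2 * (2 ^ (2 * a + 1) * T t (a + 1) ^ 2) := by
      calc (2 * t - 3) ^ 2 * 3 ^ (2 * a) = 3 ^ (2 * a) * (2 * t - 3) ^ 2 := by ring
        _ ≤ 2 ^ (2 * a + (4 * t - 7)) := hN
        _ = 2 ^ (2 * a + 1) * (2 ^ (2 * t - 4)) ^ 2 := by
            rw [← pow_mul, ← pow_add]
            congr 1
            omega
        _ ≤ 2 ^ (2 * a + 1) * ((2 * t - 3) * (2 * t - 3).choose (t - 2)) ^ 2 := by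
            exact Nat.mul_le_mul_left _ (Nat.pow_le_pow_left hCc 2)
        _ ≤ 2 ^ (2 * a + 1) * ((2 * t - 3) * T t (a + 1)) ^ 2 := by
            exact Nat.mul_le_mul_left _ (Nat.pow_le_pow_left (Nat.mul_le_mul_left _ hT') 2)
        _ = (2 * t - 3) ^ 2 * (2 ^ (2 * a + 1) * T t (a + 1) ^ 2) := by ring
    have h0 : 0 < 2 * t - 3 := by omega
    exact Nat.le_of_mul_le_mul_left c1 (by positivity)
  -- assemble
  rw [gFun_eq t a (by omega) (by omega), gFun_eq t (a + 1) (by omega) (by omega)]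
  have hmain : 2 ^ (2 * a) * (2 * T t a ^ 2) ^ a ≤ 2 ^ (2 * a) * (2 * T t (a + 1) ^ 2) ^ (a + 1) := by
    have e1 : (2 * T t a ^ 2) ^ a = 2 ^ a * T t a ^ (2 * a) := by
      rw [mul_pow, ← pow_mul]
    have e2 : (2 * T t (a + 1) ^ 2) ^ (a + 1) = 2 ^ (a + 1) * T t (a + 1) ^ (2 * a + 2) := by
      rw [mul_pow, ← pow_mul, show 2 * (a + 1) = 2 * a + 2 by ring]
    have k1' : (2 * T t a) ^ (2 * a) ≤ (3 * T t (a + 1)) ^ (2 * a) :=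
      Nat.pow_le_pow_left kT _
    rw [mul_pow, mul_pow] at k1'
    calc 2 ^ (2 * a) * (2 * T t a ^ 2) ^ a
        = 2 ^ a * (2 ^ (2 * a) * T t a ^ (2 * a)) := by rw [e1]; ring
      _ ≤ 2 ^ a * (3 ^ (2 * a) * T t (a + 1) ^ (2 * a)) :=
          Nat.mul_le_mul_left _ k1' 
      _ ≤ 2 ^ a * ((2 ^ (2 * a + 1) * T t (a + 1) ^ 2) * T t (a + 1) ^ (2 * a)) :=
          Nat.mul_le_mul_left _ (Nat.mul_le_mul_right _ kP)
      _ = 2 ^ (2 * a) * (2 ^ (a + 1) * T t (a + 1) ^ (2 * a + 2)) := by ring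
      _ = 2 ^ (2 * a) * (2 * T t (a + 1) ^ 2) ^ (a + 1) := by rw [e2]
  exact Nat.le_of_mul_le_mul_left hmain (by positivity)

lemma S_top (t : ℕ) (ht : 5 ≤ t) : S t (2 * t - 3) = (2 * t - 3).choose (t - 2) := by
  rw [S]
  have h1 : 2 * t - 3 - t = t - 3 := by omega
  have h2 : 2 * t - 3 - 1 = 2 * t - 4 := by omega
  rw [h1, h2]
  have h3 : t - 2 = (t - 3) + 1 := by omega
  rw [h3, Finset.sum_Icc_succ_top (by omega), Finset.Icc_self, Finset.sum_singleton]
  rw [show 2 * t - 3 = (2 * t - 4) + 1 by omega]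
  exact (Nat.choose_succ_succ (2 * t - 4) (t - 3)).symm

lemma T_top (t : ℕ) (ht : 5 ≤ t) : T t (2 * t - 3) = (2 * t - 3).choose (t - 2) := by
  rw [T, show 2 * t - 3 - (2 * t - 3) = 0 by omega, pow_zero, one_mul, S_top t ht]

lemma chain (t : ℕ) (ht : 5 ≤ t) :
    ∀ d, d ≤ t - 2 →
      (2 * t - 3).choose (t - 2) ≤ T t (2 * t - 3 - d) ∧
      gFun t (2 * t - 3 - d) ≤ gFun t (2 * t - 3) := by
  intro d
  induction d with
  | zero =>
    intro _
    constructor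
    · rw [show 2 * t - 3 - 0 = 2 * t - 3 by omega, T_top t ht]
    · rw [show 2 * t - 3 - 0 = 2 * t - 3 by omega]
  | succ d ih =>
    intro hd
    obtain ⟨ih1, ih2⟩ := ih (by omega)
    have ha : 2 * t - 3 - (d + 1) = 2 * t - 4 - d := by omega
    have haa : (2 * t - 4 - d) + 1 = 2 * t - 3 - d := by omega
    have ha1 : t - 1 ≤ 2 * t - 4 - d := by omega
    have ha2 : 2 * t - 4 - d ≤ 2 * t - 4 := by omega
    rw [ha]
    rw [← haa] at ih1 ih2
    constructor
    · exact le_trans ih1 (T_mono t (2 * t - 4 - d) ht ha1 ha2)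
    · exact le_trans (step t (2 * t - 4 - d) ht ha1 ha2 ih1) ih2

end Stmt18

theorem stmt18 :
    ∃ t₀ : ℕ, ∀ t : ℕ, t₀ ≤ t →
      (∀ a : ℕ, t - 1 ≤ a → a ≤ 2 * t - 3 → gFun t a ≤ gFun t (2 * t - 3)) ∧
      gFun t (2 * t - 3) = (2 * ((2 * t - 3).choose (t - 2)) ^ 2) ^ (2 * t - 3) := by
  refine ⟨5, fun t ht => ⟨?_, ?_⟩⟩
  · intro a h1 h2
    have h := (Stmt18.chain t ht (2 * t - 3 - a) (by omega)).2
    rwa [show 2 * t - 3 - (2 * t - 3 - a) = a by omega] at h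
  · rw [Stmt18.gFun_eq t (2 * t - 3) (by omega) le_rfl, Stmt18.T_top t ht]
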